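/- Let G be a finite simple graph, k a natural number, and v a vertex of G of degree exactly 3 whose neighborhood N(v) = {a, b, c} is an independent set in G. Let G' be the graph with vertex set V(G) \ {v} whose edge set consists of all edges of G between vertices of V(G) \ {v}, together with the edges {a, b} and {b, c}, all edges {a, x} for x ∈ N_G(b) \ {v, a}, all edges {b, y} for y ∈ N_G(c) \ {v, b}, and all edges {c, z} for z ∈ N_G(a) \ {v, c}. Then G has a vertex cover of size at most k if and only if G' has a vertex cover of size at most k. -/
import Mathlib


/-- `X` is a vertex cover of `G`: every edge has at least one endpoint in `X`. -/
def IsVC {V : Type*} (G : SimpleGraph V) (X : Set V) : Prop :=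
  ∀ ⦃u w : V⦄, G.Adj u w → u ∈ X ∨ w ∈ X

/-- `G` has a vertex cover of size at most `k`. -/
def HasVC {V : Type*} (G : SimpleGraph V) (k : ℕ) : Prop :=
  ∃ X : Set V, IsVC G X ∧ X.ncard ≤ k

/-- The graph `G'` on `V(G) \ {v}` whose edges are those of `G` between vertices of
`V(G) \ {v}`, together with `{a, b}`, `{b, c}`, all `{a, x}` for `x ∈ N_G(b) \ {v, a}`,
all `{b, y}` for `y ∈ N_G(c) \ {v, b}`, and all `{c, z}` for `z ∈ N_G(a) \ {v, c}`. -/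
def ReduceDegThree {V : Type*} (G : SimpleGraph V) (v a b c : V) :
    SimpleGraph {w : V // w ≠ v} :=
  SimpleGraph.fromRel (fun w w' =>
    G.Adj w.1 w'.1 ∨
    (w.1 = a ∧ w'.1 = b) ∨ (w.1 = b ∧ w'.1 = c) ∨
    (w.1 = a ∧ G.Adj b w'.1) ∨ (w.1 = b ∧ G.Adj c w'.1) ∨ (w.1 = c ∧ G.Adj a w'.1))

theorem stmt_15 {V : Type*} [Fintype V] (G : SimpleGraph V) (k : ℕ)
    (v a b c : V)
    (hab : a ≠ b) (hac : a ≠ c) (hbc : b ≠ c)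
    (hN : G.neighborSet v = {a, b, c})
    (hnab : ¬ G.Adj a b) (hnac : ¬ G.Adj a c) (hnbc : ¬ G.Adj b c) :
    HasVC G k ↔ HasVC (ReduceDegThree G v a b c) k := by
  classical
  have hva : G.Adj v a := by
    rw [← SimpleGraph.mem_neighborSet, hN]; left; rfl
  have hvb : G.Adj v b := by
    rw [← SimpleGraph.mem_neighborSet, hN]; right; left; rfl
  have hvc : G.Adj v c := by
    rw [← SimpleGraph.mem_neighborSet, hN]; right; right; rfl
  have hav : a ≠ v := hva.ne'
  have hbv : b ≠ v := hvb.ne'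
  have hcv : c ≠ v := hvc.ne'
  constructor
  · rintro ⟨X, hX, hXk⟩
    have h1 : v ∈ X ∨ a ∈ X := hX hva
    have h2 : v ∈ X ∨ b ∈ X := hX hvb
    have h3 : v ∈ X ∨ c ∈ X := hX hvc
    obtain ⟨w₀, c1, c2, c3, c4, c5, c6⟩ :
        ∃ w₀ : V,
          (a ∈ X ∨ b ∈ X ∨ w₀ = a ∨ w₀ = b) ∧
          (b ∈ X ∨ c ∈ X ∨ w₀ = b ∨ w₀ = c) ∧
          (a ∈ X ∨ b ∉ X ∨ w₀ = a) ∧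
          (b ∈ X ∨ c ∉ X ∨ w₀ = b) ∧
          (c ∈ X ∨ a ∉ X ∨ w₀ = c) ∧
          (v ∈ X ∨ w₀ ∈ X) := by
      by_cases ha : a ∈ X <;> by_cases hb : b ∈ X <;> by_cases hc : c ∈ X
      · exact ⟨b, Or.inl ha, Or.inl hb, Or.inl ha, Or.inl hb, Or.inl hc, Or.inr hb⟩
      · exact ⟨c, Or.inl ha, Or.inl hb, Or.inl ha, Or.inl hb, Or.inr (Or.inr rfl),
          Or.inl (h3.resolve_right hc)⟩
      · exact ⟨b, Or.inl ha, Or.inr (Or.inl hc), Or.inl ha, Or.inr (Or.inr rfl), Or.inl hc,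
          Or.inl (h2.resolve_right hb)⟩
      · exact ⟨c, Or.inl ha, Or.inr (Or.inr (Or.inr rfl)), Or.inl ha, Or.inr (Or.inl hc),
          Or.inr (Or.inr rfl), Or.inl (h2.resolve_right hb)⟩
      · exact ⟨a, Or.inr (Or.inl hb), Or.inl hb, Or.inr (Or.inr rfl), Or.inl hb, Or.inl hc,
          Or.inl (h1.resolve_right ha)⟩
      · exact ⟨a, Or.inr (Or.inl hb), Or.inl hb, Or.inr (Or.inr rfl), Or.inl hb,
          Or.inr (Or.inl ha), Or.inl (h1.resolve_right ha)⟩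
      · exact ⟨b, Or.inr (Or.inr (Or.inr rfl)), Or.inr (Or.inl hc), Or.inr (Or.inl hb),
          Or.inr (Or.inr rfl), Or.inl hc, Or.inl (h1.resolve_right ha)⟩
      · exact ⟨b, Or.inr (Or.inr (Or.inr rfl)), Or.inr (Or.inr (Or.inl rfl)),
          Or.inr (Or.inl hb), Or.inr (Or.inl hc), Or.inr (Or.inl ha),
          Or.inl (h1.resolve_right ha)⟩
    set S : Set V := (X \ {v}) ∪ {w₀} with hS
    refine ⟨{u : {w : V // w ≠ v} | u.1 ∈ S}, ?_, ?_⟩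
    · have key : ∀ u w : {w : V // w ≠ v},
          (G.Adj u.1 w.1 ∨
            (u.1 = a ∧ w.1 = b) ∨ (u.1 = b ∧ w.1 = c) ∨
            (u.1 = a ∧ G.Adj b w.1) ∨ (u.1 = b ∧ G.Adj c w.1) ∨
            (u.1 = c ∧ G.Adj a w.1)) →
          u.1 ∈ S ∨ w.1 ∈ S := by
        have hmemX : ∀ u : {w : V // w ≠ v}, u.1 ∈ X → u.1 ∈ S :=
          fun u hu => Or.inl ⟨hu, u.2⟩
        have hmemw : ∀ u : {w : V // w ≠ v}, u.1 = w₀ → u.1 ∈ S :=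
          fun u hu => Or.inr hu
        intro u w h
        rcases h with h | ⟨e1, e2⟩ | ⟨e1, e2⟩ | ⟨e1, e2⟩ | ⟨e1, e2⟩ | ⟨e1, e2⟩
        · exact (hX h).imp (hmemX u) (hmemX w)
        · rcases c1 with h' | h' | h' | h'
          · exact Or.inl (hmemX u (e1 ▸ h'))
          · exact Or.inr (hmemX w (e2 ▸ h'))
          · exact Or.inl (hmemw u (e1.trans h'.symm))
          · exact Or.inr (hmemw w (e2.trans h'.symm))
        · rcases c2 with h' | h' | h' | h'
          · exact Or.inl (hmemX u (e1 ▸ h'))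
          · exact Or.inr (hmemX w (e2 ▸ h'))
          · exact Or.inl (hmemw u (e1.trans h'.symm))
          · exact Or.inr (hmemw w (e2.trans h'.symm))
        · rcases c3 with h' | h' | h'
          · exact Or.inl (hmemX u (e1 ▸ h'))
          · exact Or.inr (hmemX w ((hX e2).resolve_left h'))
          · exact Or.inl (hmemw u (e1.trans h'.symm))
        · rcases c4 with h' | h' | h'
          · exact Or.inl (hmemX u (e1 ▸ h'))
          · exact Or.inr (hmemX w ((hX e2).resolve_left h'))
          · exact Or.inl (hmemw u (e1.trans h'.symm))
        · rcases c5 with h' | h' | h'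
          · exact Or.inl (hmemX u (e1 ▸ h'))
          · exact Or.inr (hmemX w ((hX e2).resolve_left h'))
          · exact Or.inl (hmemw u (e1.trans h'.symm))
      intro u w huw
      rw [ReduceDegThree, SimpleGraph.fromRel_adj] at huw
      rcases huw.2 with h | h
      · exact key u w h
      · exact (key w u h).symm
    · have himg : Subtype.val '' {u : {w : V // w ≠ v} | u.1 ∈ S} ⊆ S := by
        rintro x ⟨u, hu, rfl⟩; exact hu
      have h0 : ({u : {w : V // w ≠ v} | u.1 ∈ S}).ncard ≤ S.ncard := by
        rw [← Set.ncard_image_of_injective _ Subtype.val_injective]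
        exact Set.ncard_le_ncard himg (Set.toFinite _)
      have hSX : S.ncard ≤ X.ncard := by
        rcases c6 with hv | hw
        · calc S.ncard ≤ (X \ {v}).ncard + ({w₀} : Set V).ncard := Set.ncard_union_le _ _
            _ = (X \ {v}).ncard + 1 := by rw [Set.ncard_singleton]
            _ = X.ncard := Set.ncard_diff_singleton_add_one hv (Set.toFinite _)
        · apply Set.ncard_le_ncard _ (Set.toFinite _)
          rintro x (⟨hx, -⟩ | hx)
          · exact hx
          · exact hx ▸ hw
      exact le_trans h0 (le_trans hSX hXk)
  · rintro ⟨Y, hY, hYk⟩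
    set Yv : Set V := Subtype.val '' Y with hYv
    have hmem : ∀ (x : V) (hx : x ≠ v), x ∈ Yv ↔ (⟨x, hx⟩ : {w : V // w ≠ v}) ∈ Y := by
      intro x hx
      constructor
      · rintro ⟨⟨y, hy⟩, hu, rfl⟩; exact hu
      · intro h; exact ⟨_, h, rfl⟩
    have hYadj : ∀ (x y : V) (hx : x ≠ v) (hy : y ≠ v), x ≠ y →
        ((G.Adj x y ∨ (x = a ∧ y = b) ∨ (x = b ∧ y = c) ∨
          (x = a ∧ G.Adj b y) ∨ (x = b ∧ G.Adj c y) ∨ (x = c ∧ G.Adj a y))) →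
        x ∈ Yv ∨ y ∈ Yv := by
      intro x y hx hy hxy hr
      have : (⟨x, hx⟩ : {w : V // w ≠ v}) ∈ Y ∨ (⟨y, hy⟩ : {w : V // w ≠ v}) ∈ Y := by
        apply hY
        rw [ReduceDegThree, SimpleGraph.fromRel_adj]
        exact ⟨fun h => hxy (congrArg Subtype.val h), Or.inl hr⟩
      rcases this with h | h
      · exact Or.inl ((hmem x hx).2 h)
      · exact Or.inr ((hmem y hy).2 h)
    have hGadj : ∀ (x y : V), x ≠ v → y ≠ v → G.Adj x y → x ∈ Yv ∨ y ∈ Yv :=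
      fun x y hx hy h => hYadj x y hx hy h.ne (Or.inl h)
    have habY : a ∈ Yv ∨ b ∈ Yv := hYadj a b hav hbv hab (Or.inr (Or.inl ⟨rfl, rfl⟩))
    have hbcY : b ∈ Yv ∨ c ∈ Yv := hYadj b c hbv hcv hbc (Or.inr (Or.inr (Or.inl ⟨rfl, rfl⟩)))
    have hNbY : a ∉ Yv → ∀ z, G.Adj b z → z ≠ v → z ∈ Yv := by
      intro ha z hz hzv
      have hne : a ≠ z := fun h => hnab (h ▸ hz.symm)
      exact ((hYadj a z hav hzv hne (Or.inr (Or.inr (Or.inr (Or.inl ⟨rfl, hz⟩))))).resolve_left ha)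
    have hNcY : b ∉ Yv → ∀ z, G.Adj c z → z ≠ v → z ∈ Yv := by
      intro hb z hz hzv
      have hne : b ≠ z := fun h => hnbc (h ▸ hz.symm)
      exact ((hYadj b z hbv hzv hne
        (Or.inr (Or.inr (Or.inr (Or.inr (Or.inl ⟨rfl, hz⟩)))))).resolve_left hb)
    have hNaY : c ∉ Yv → ∀ z, G.Adj a z → z ≠ v → z ∈ Yv := by
      intro hc z hz hzv
      have hne : c ≠ z := fun h => hnac (by rw [h]; exact hz)
      exact ((hYadj c z hcv hzv hne
        (Or.inr (Or.inr (Or.inr (Or.inr (Or.inr ⟨rfl, hz⟩)))))).resolve_left hc)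
    have hcardYv : Yv.ncard = Y.ncard := Set.ncard_image_of_injective _ Subtype.val_injective
    have hvN : ∀ w : V, G.Adj v w → w = a ∨ w = b ∨ w = c := by
      intro w hw
      have : w ∈ G.neighborSet v := hw
      rw [hN] at this
      exact this
    by_cases hall : a ∈ Yv ∧ b ∈ Yv ∧ c ∈ Yv
    · refine ⟨Yv, ?_, hcardYv ▸ hYk⟩
      intro u w huw
      by_cases hu : u = v
      · subst hu
        rcases hvN w huw with rfl | rfl | rfl
        · exact Or.inr hall.1
        · exact Or.inr hall.2.1
        · exact Or.inr hall.2.2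
      · by_cases hw : w = v
        · subst hw
          rcases hvN u huw.symm with rfl | rfl | rfl
          · exact Or.inl hall.1
          · exact Or.inl hall.2.1
          · exact Or.inl hall.2.2
        · exact hGadj u w hu hw huw
    · obtain ⟨t, htY, htN⟩ : ∃ t, t ∈ Yv ∧ ∀ z, G.Adj t z → z ≠ v → z ∈ Yv := by
        by_cases ha : a ∈ Yv
        · by_cases hb : b ∈ Yv
          · have hc : c ∉ Yv := fun hc => hall ⟨ha, hb, hc⟩
            exact ⟨a, ha, hNaY hc⟩
          · exact ⟨c, hbcY.resolve_left hb, hNcY hb⟩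
        · exact ⟨b, habY.resolve_left ha, hNbY ha⟩
      refine ⟨insert v (Yv \ {t}), ?_, ?_⟩
      · intro u w huw
        by_cases hu : u = v
        · exact Or.inl (hu ▸ Set.mem_insert _ _)
        · by_cases hw : w = v
          · exact Or.inr (hw ▸ Set.mem_insert _ _)
          · rcases hGadj u w hu hw huw with h | h
            · by_cases hut : u = t
              · have : w ∈ Yv := htN w (hut ▸ huw) hw
                have hwt : w ≠ t := fun hwt => G.irrefl ((hut.trans hwt.symm) ▸ huw)
                exact Or.inr (Set.mem_insert_of_mem _ ⟨this, hwt⟩)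
              · exact Or.inl (Set.mem_insert_of_mem _ ⟨h, hut⟩)
            · by_cases hwt : w = t
              · have : u ∈ Yv := htN u (hwt ▸ huw.symm) hu
                have hut : u ≠ t := fun hut => G.irrefl ((hwt.trans hut.symm) ▸ huw.symm)
                exact Or.inl (Set.mem_insert_of_mem _ ⟨this, hut⟩)
              · exact Or.inr (Set.mem_insert_of_mem _ ⟨h, hwt⟩)
      · calc (insert v (Yv \ {t})).ncard ≤ (Yv \ {t}).ncard + 1 := Set.ncard_insert_le _ _
          _ = Yv.ncard := Set.ncard_diff_singleton_add_one htY (Set.toFinite _)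
          _ = Y.ncard := hcardYv
          _ ≤ k := hYk
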